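/- Let F be an F_q-subspace of L = F_{q^m} with dim_{F_q} F = 2 and 1 ∈ F, and suppose n = 2k. Let D be a k-dimensional L-subspace of L^{n+t} that is spanned (over L) by k vectors all of whose coordinates lie in F. Let D^⊥ = { x ∈ L^{n+t} : Σ_i x_i c_i = 0 for all c ∈ D } be its dual with respect to the standard bilinear form; D^⊥ has L-dimension n+t−k. Then the set { c ∈ D^⊥ : Supp(c) ⊆ F_q } is an F_q-subspace of dimension at least t, and the set { c ∈ D^⊥ : Supp(c) ⊆ F } is an F_q-subspace of dimension at least n−k+2t. -/

import Mathlib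

open Module Submodule

lemma stmt5_aux {Fq L : Type*} [Field Fq] [Field L] [Algebra Fq L]
    [FiniteDimensional Fq L]
    (N k : ℕ) (v : Fin k → Fin N → L)
    (P W : Submodule Fq L)
    (hmul : ∀ x ∈ P, ∀ j i, x * v j i ∈ W) :
    ∃ S : Submodule Fq (Fin N → L),
      (S : Set (Fin N → L)) = {c | (∀ j, ∑ i, c i * v j i = 0) ∧ ∀ i, c i ∈ P} ∧
      N * finrank Fq ↥P ≤ finrank Fq ↥S + k * finrank Fq ↥W := by
  classical
  let ι : (Fin N → ↥P) →ₗ[Fq] (Fin N → L) :=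
    LinearMap.pi (fun i => P.subtype.comp (LinearMap.proj i))
  have hι : ∀ (d : Fin N → ↥P) (i : Fin N), ι d i = (d i : L) := fun d i => rfl
  have hinj : Function.Injective ι := by
    intro a b h
    funext i
    exact Subtype.ext (congrFun h i)
  have hW : ∀ (d : Fin N → ↥P) (j : Fin k), (∑ i, (d i : L) * v j i) ∈ W := by
    intro d j
    exact Submodule.sum_mem _ fun i _ => hmul _ (d i).2 j i
  let μ : Fin k → ((Fin N → ↥P) →ₗ[Fq] L) := fun j =>
    ∑ i, (LinearMap.mulRight Fq (v j i)).comp (P.subtype.comp (LinearMap.proj i))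
  have hμ : ∀ (j) (d : Fin N → ↥P), μ j d = ∑ i, (d i : L) * v j i := by
    intro j d
    simp [μ, LinearMap.sum_apply]
  let ψ : (Fin N → ↥P) →ₗ[Fq] (Fin k → ↥W) :=
    LinearMap.pi (fun j => (μ j).codRestrict W (fun d => by rw [hμ]; exact hW d j))
  have hψ : ∀ (d : Fin N → ↥P) (j), ((ψ d j : L)) = ∑ i, (d i : L) * v j i := by
    intro d j
    simp [ψ, hμ]
  refine ⟨(LinearMap.ker ψ).map ι, ?_, ?_⟩
  · ext c
    simp only [SetLike.mem_coe, Submodule.mem_map, LinearMap.mem_ker, Set.mem_setOf_eq]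
    constructor
    · rintro ⟨d, hd, rfl⟩
      refine ⟨fun j => ?_, fun i => (d i).2⟩
      have h1 : ((ψ d j : L)) = 0 := by rw [hd]; rfl
      rw [hψ] at h1
      simpa [hι] using h1
    · rintro ⟨h0, hP⟩
      refine ⟨fun i => ⟨c i, hP i⟩, ?_, rfl⟩
      funext j
      exact Subtype.ext (by rw [hψ]; exact h0 j)
  · have e1 : finrank Fq ↥((LinearMap.ker ψ).map ι) = finrank Fq ↥(LinearMap.ker ψ) :=
      (Submodule.equivMapOfInjective ι hinj (LinearMap.ker ψ)).finrank_eq.symm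
    have e2 : finrank Fq ↥(LinearMap.range ψ) + finrank Fq ↥(LinearMap.ker ψ) =
        finrank Fq (Fin N → ↥P) := LinearMap.finrank_range_add_finrank_ker ψ
    have e3 : finrank Fq (Fin N → ↥P) = N * finrank Fq ↥P := by
      rw [finrank_pi_fintype]
      simp [Finset.sum_const, mul_comm]
    have e4 : finrank Fq ↥(LinearMap.range ψ) ≤ finrank Fq (Fin k → ↥W) :=
      Submodule.finrank_le _
    have e5 : finrank Fq (Fin k → ↥W) = k * finrank Fq ↥W := by
      rw [finrank_pi_fintype]
      simp [Finset.sum_const, mul_comm]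
    omega

/-- If `D ⊆ L^{n+t}` is a `k`-dimensional `L`-subspace spanned by `k`
vectors with coordinates in a 2-dimensional subspace `F ∋ 1`, and `n = 2k`, then the
dual `D^⊥` has `L`-dimension `n+t−k`, the codewords of `D^⊥` with support in `F_q`
form an `F_q`-subspace of dimension at least `t`, and those with support in `F` form
an `F_q`-subspace of dimension at least `n−k+2t`. -/
theorem stmt_5 {Fq L : Type*} [Field Fq] [Fintype Fq] [Field L] [Algebra Fq L]
    [FiniteDimensional Fq L]
    (n k t : ℕ) (hn2k : n = 2 * k)
    (F : Submodule Fq L) (hF2 : Module.finrank Fq ↥F = 2) (h1F : (1 : L) ∈ F)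
    (D : Submodule L (Fin (n + t) → L))
    (hDk : Module.finrank L ↥D = k)
    (hDspan : ∃ v : Fin k → (Fin (n + t) → L),
      (∀ i j, v i j ∈ F) ∧ Submodule.span L (Set.range v) = D)
    (Dperp : Submodule L (Fin (n + t) → L))
    (hDperp : (Dperp : Set (Fin (n + t) → L)) =
      {x : Fin (n + t) → L | ∀ c ∈ D, ∑ i, x i * c i = 0}) :
    Module.finrank L ↥Dperp = n + t - k ∧
    (∃ S1 : Submodule Fq (Fin (n + t) → L),
      (S1 : Set (Fin (n + t) → L)) =
        {c : Fin (n + t) → L | c ∈ Dperp ∧ ∀ i, c i ∈ (1 : Submodule Fq L)} ∧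
      t ≤ Module.finrank Fq ↥S1) ∧
    (∃ S2 : Submodule Fq (Fin (n + t) → L),
      (S2 : Set (Fin (n + t) → L)) =
        {c : Fin (n + t) → L | c ∈ Dperp ∧ ∀ i, c i ∈ F} ∧
      n - k + 2 * t ≤ Module.finrank Fq ↥S2) := by
  classical
  obtain ⟨v, hvF, hvspan⟩ := hDspan
  -- membership characterization of Dperp
  have hmem : ∀ x : Fin (n + t) → L, x ∈ Dperp ↔ ∀ j, ∑ i, x i * v j i = 0 := by
    intro x
    have hx : x ∈ Dperp ↔ ∀ c ∈ D, ∑ i, x i * c i = 0 := by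
      have := Set.ext_iff.mp hDperp x
      simpa using this
    rw [hx]
    constructor
    · intro h j
      exact h (v j) (hvspan ▸ Submodule.subset_span (Set.mem_range_self j))
    · intro h c hc
      let μ : (Fin (n + t) → L) →ₗ[L] L := ∑ i, x i • LinearMap.proj i
      have hμ : ∀ d, μ d = ∑ i, x i * d i := by
        intro d; simp [μ, LinearMap.sum_apply]
      have hDle : D ≤ LinearMap.ker μ := by
        rw [← hvspan, Submodule.span_le]
        rintro _ ⟨j, rfl⟩
        simp only [SetLike.mem_coe, LinearMap.mem_ker, hμ]
        exact h j
      have := hDle hc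
      rw [LinearMap.mem_ker, hμ] at this
      exact this
  -- Part 1
  have part1 : Module.finrank L ↥Dperp = n + t - k := by
    let B : LinearMap.BilinForm L (Fin (n + t) → L) :=
      Matrix.toBilin' (1 : Matrix (Fin (n + t)) (Fin (n + t)) L)
    have hB : ∀ x y : Fin (n + t) → L, B x y = ∑ i, x i * y i := by
      intro x y
      rw [Matrix.toBilin'_apply]
      simp [Matrix.one_apply, Finset.sum_ite_eq, mul_ite]
    have hrefl : B.IsRefl := by
      intro x y h
      rw [hB] at h ⊢
      simpa [mul_comm] using h
    have hnd : B.Nondegenerate := by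
      refine ⟨?_, ?_⟩
      · intro x hx
        funext i
        have := hx (Pi.single i 1)
        rw [hB] at this
        simpa [Pi.single_apply, mul_ite, Finset.sum_ite_eq] using this
      · intro y hy
        funext i
        have := hy (Pi.single i 1)
        rw [hB] at this
        simpa [Pi.single_apply, ite_mul, Finset.sum_ite_eq'] using this
    have hDperp_eq : Dperp = B.orthogonal D := by
      ext x
      rw [LinearMap.BilinForm.mem_orthogonal_iff]
      have hx : x ∈ Dperp ↔ ∀ c ∈ D, ∑ i, x i * c i = 0 := by
        have := Set.ext_iff.mp hDperp x
        simpa using this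
      rw [hx]
      constructor
      · intro h c hc
        rw [hB]
        simpa [mul_comm] using h c hc
      · intro h c hc
        have := h c hc
        rw [hB] at this
        simpa [mul_comm] using this
    rw [hDperp_eq, LinearMap.BilinForm.finrank_orthogonal hnd, hDk,
      Module.finrank_fin_fun]
  refine ⟨part1, ?_, ?_⟩
  -- Part 2 : S1
  · obtain ⟨S1, hS1set, hS1rank⟩ := stmt5_aux (n + t) k v (1 : Submodule Fq L) F
      (by
        rintro x hx j i
        obtain ⟨a, rfl⟩ := Submodule.mem_one.mp hx
        rw [← Algebra.smul_def]
        exact F.smul_mem a (hvF j i))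
    refine ⟨S1, ?_, ?_⟩
    · rw [hS1set]
      ext c
      simp [hmem c, and_comm]
    · have h1 : finrank Fq ↥(1 : Submodule Fq L) = 1 := by
        rw [Submodule.one_eq_span, finrank_span_singleton (one_ne_zero)]
      rw [h1, hF2] at hS1rank
      omega
  -- Part 3 : S2
  · -- find α
    have hlt : Submodule.span Fq {(1 : L)} < F := by
      refine lt_of_le_of_ne ?_ ?_
      · rw [Submodule.span_le, Set.singleton_subset_iff]; exact h1F
      · intro h
        rw [← h, finrank_span_singleton (one_ne_zero)] at hF2
        omega
    obtain ⟨α, hαF, hα1⟩ := SetLike.exists_of_lt hlt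
    have hFspan : F = Submodule.span Fq {(1 : L), α} := by
      refine (Submodule.eq_of_le_of_finrank_le ?_ ?_).symm
      · rw [Submodule.span_le]
        rintro x hx
        rcases hx with h | h
        · rw [h]; exact h1F
        · rw [Set.mem_singleton_iff] at h; rw [h]; exact hαF
      · rw [hF2]
        have hlt2 : Submodule.span Fq {(1 : L)} < Submodule.span Fq {(1 : L), α} := by
          refine lt_of_le_of_ne (Submodule.span_mono (by simp)) ?_
          intro h
          exact hα1 (h ▸ Submodule.subset_span (by simp))
        have := Submodule.finrank_lt_finrank_of_lt hlt2
        rw [finrank_span_singleton (one_ne_zero)] at this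
        omega
    let s : Finset L := {1, α, α * α}
    let W : Submodule Fq L := Submodule.span Fq (s : Set L)
    have hWle : finrank Fq ↥W ≤ 3 := by
      refine le_trans (finrank_span_finset_le_card s) ?_
      exact le_trans (Finset.card_insert_le _ _)
        (Nat.add_le_add_right (le_trans (Finset.card_insert_le _ _)
          (Nat.add_le_add_right (Finset.card_singleton (α * α)).le 1)) 1)
    have h1W : (1 : L) ∈ W := Submodule.subset_span (by simp [s])
    have hαW : α ∈ W := Submodule.subset_span (by simp [s])
    have hααW : α * α ∈ W := Submodule.subset_span (by simp [s])
    obtain ⟨S2, hS2set, hS2rank⟩ := stmt5_aux (n + t) k v F W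
      (by
        rintro x hx j i
        have hy : v j i ∈ F := hvF j i
        rw [hFspan, Submodule.mem_span_pair] at hx hy
        obtain ⟨a, b, rfl⟩ := hx
        obtain ⟨a', b', hy'⟩ := hy
        rw [← hy']
        have : (a • (1:L) + b • α) * (a' • (1:L) + b' • α) =
            (a * a') • (1:L) + (a * b' + b * a') • α + (b * b') • (α * α) := by
          simp only [Algebra.smul_def, map_mul, map_add]
          ring
        rw [this]
        exact Submodule.add_mem _ (Submodule.add_mem _ (W.smul_mem _ h1W) (W.smul_mem _ hαW))
          (W.smul_mem _ hααW))
    refine ⟨S2, ?_, ?_⟩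
    · rw [hS2set]
      ext c
      simp [hmem c, and_comm]
    · rw [hF2] at hS2rank
      have : (n + t) * 2 ≤ finrank Fq ↥S2 + k * 3 :=
        le_trans hS2rank (by nlinarith [hWle])
      omega
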